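/- Let B be a real symmetric positive definite N×N matrix and D a diagonal complex N×N matrix. Then every eigenvalue λ of the complex matrix D B D̄ B (where D̄ is the entrywise conjugate of D) is real and satisfies λ ≥ 0. -/

import Mathlib

open Matrix Finset

lemma quad_eq {N : ℕ} (B : Matrix (Fin N) (Fin N) ℝ) (hBsym : B.IsSymm)
    (x : Fin N → ℂ) :
    star x ⬝ᵥ (B.map Complex.ofReal) *ᵥ x =
      (((fun i => (x i).re) ⬝ᵥ B *ᵥ (fun i => (x i).re)
        + (fun i => (x i).im) ⬝ᵥ B *ᵥ (fun i => (x i).im) : ℝ) : ℂ) := by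
  classical
  set a : Fin N → ℝ := fun i => (x i).re with ha
  set b : Fin N → ℝ := fun i => (x i).im with hb
  have hsym : ∀ i j, B i j = B j i := fun i j => (hBsym.apply j i)
  simp only [dotProduct, mulVec, dotProduct, map_apply, Pi.star_apply]
  simp_rw [Finset.mul_sum]
  apply Complex.ext
  · have h1 : ∀ i j : Fin N, (star (x i) * ((B i j : ℂ) * x j)).re
        = a i * (B i j * a j) + b i * (B i j * b j) := by
      intro i j
      simp only [Complex.star_def, Complex.mul_re, Complex.mul_im, Complex.conj_re,
        Complex.conj_im, Complex.ofReal_re, Complex.ofReal_im, ha, hb]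
      ring
    simp only [Complex.re_sum, Complex.ofReal_re]
    simp_rw [h1]
    rw [← Finset.sum_add_distrib]
    apply Finset.sum_congr rfl; intro i _
    rw [← Finset.sum_add_distrib]
  · simp only [Complex.im_sum, Complex.ofReal_im, Complex.mul_im, Complex.mul_re,
      Complex.ofReal_re, RingHom.coe_coe, Complex.conj_re, Complex.conj_im]
    have : ∀ i j : Fin N, (starRingEnd ℂ) (x i) * (↑(B i j) * x j) = ↑(B i j) * ((starRingEnd ℂ) (x i) * x j) := by intros; ring
    have key : ∑ i : Fin N, ∑ j : Fin N, ((starRingEnd ℂ) (x i) * (↑(B i j) * x j)).im = 0 := by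
      have h1 : ∀ i j : Fin N, ((starRingEnd ℂ) (x i) * ((B i j : ℂ) * x j)).im
          = B i j * (a i * b j - b i * a j) := by
        intro i j
        simp [Complex.mul_im, Complex.mul_re, ha, hb]
        ring
      simp_rw [h1]
      have h2 : ∑ i : Fin N, ∑ j : Fin N, B i j * (a i * b j - b i * a j)
          = ∑ j : Fin N, ∑ i : Fin N, B i j * (a i * b j - b i * a j) := Finset.sum_comm
      have h3 : ∑ j : Fin N, ∑ i : Fin N, B i j * (a i * b j - b i * a j)
          = -∑ i : Fin N, ∑ j : Fin N, B i j * (a i * b j - b i * a j) := by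
        rw [← Finset.sum_neg_distrib]
        apply Finset.sum_congr rfl; intro i _
        rw [← Finset.sum_neg_distrib]
        apply Finset.sum_congr rfl; intro j _
        rw [hsym i j]; ring
      linarith [h2, h3]
    calc ∑ i : Fin N, ∑ j : Fin N, (((starRingEnd ℂ) (x i)).re * (↑(B i j) * x j).im + ((starRingEnd ℂ) (x i)).im * (↑(B i j) * x j).re) = ∑ i : Fin N, ∑ j : Fin N, ((starRingEnd ℂ) (x i) * (↑(B i j) * x j)).im := by
          simp [Complex.mul_im]
      _ = 0 := key

theorem stmt7 {N : ℕ} (B : Matrix (Fin N) (Fin N) ℝ)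
    (hBsym : B.IsSymm) (hB : B.PosDef)
    (d : Fin N → ℂ) (D : Matrix (Fin N) (Fin N) ℂ) (hD : D = diagonal d)
    (Dc Bc : Matrix (Fin N) (Fin N) ℂ)
    (hDc : Dc = D.map (starRingEnd ℂ)) (hBc : Bc = B.map (Complex.ofReal)) :
    ∀ μ : ℂ, Module.End.HasEigenvalue (Matrix.toLin' (D * Bc * Dc * Bc)) μ →
      ∃ x : ℝ, 0 ≤ x ∧ μ = (x : ℂ) := by
  intro μ hμ
  obtain ⟨v, hvmem, hv0⟩ := hμ.exists_hasEigenvector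
  have hAv : (D * Bc * Dc * Bc) *ᵥ v = μ • v := by
    have := hvmem
    rwa [Module.End.mem_eigenspace_iff, Matrix.toLin'_apply] at this
  -- Hermitian facts
  have hBcH : Bcᴴ = Bc := by
    rw [hBc]
    rw [conjTranspose]
    ext i j
    simp [hBsym.apply]
  have hDcH : Dcᴴ = D := by
    rw [hDc, hD, diagonal_map (map_zero _), diagonal_conjTranspose]
    exact congrArg diagonal (funext fun i => Complex.conj_conj (d i))
  set w : Fin N → ℂ := (Dc * Bc) *ᵥ v with hw
  -- key identity
  have key : μ * (star v ⬝ᵥ Bc *ᵥ v) = star w ⬝ᵥ Bc *ᵥ w := by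
    have lhs : μ * (star v ⬝ᵥ Bc *ᵥ v) = star v ⬝ᵥ (Bc * (D * Bc * Dc * Bc)) *ᵥ v := by
      rw [← mulVec_mulVec, hAv, mulVec_smul, dotProduct_smul]
      rfl
    have rhs : star w ⬝ᵥ Bc *ᵥ w = star v ⬝ᵥ ((Dc * Bc)ᴴ * (Bc * (Dc * Bc))) *ᵥ v := by
      rw [hw, star_mulVec, mulVec_mulVec, dotProduct_mulVec, vecMul_vecMul,
        ← dotProduct_mulVec]
    rw [lhs, rhs]
    congr 1
    rw [conjTranspose_mul, hBcH, hDcH]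
    noncomm_ring
  have hc := quad_eq B hBsym v
  have he := quad_eq B hBsym w
  rw [hBc] at *
  set a : Fin N → ℝ := fun i => (v i).re
  set b : Fin N → ℝ := fun i => (v i).im
  set r : ℝ := (fun i => (v i).re) ⬝ᵥ B *ᵥ (fun i => (v i).re)
      + (fun i => (v i).im) ⬝ᵥ B *ᵥ (fun i => (v i).im) with hr
  set s : ℝ := (fun i => (w i).re) ⬝ᵥ B *ᵥ (fun i => (w i).re)
      + (fun i => (w i).im) ⬝ᵥ B *ᵥ (fun i => (w i).im) with hs
  -- positivity
  have hqpos : ∀ y : Fin N → ℝ, 0 ≤ y ⬝ᵥ B *ᵥ y := by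
    intro y
    by_cases hy : y = 0
    · simp [hy]
    · have := hB.dotProduct_mulVec_pos hy
      simpa using this.le
  have hs0 : 0 ≤ s := add_nonneg (hqpos _) (hqpos _)
  have hr0 : 0 < r := by
    have hne : (fun i => (v i).re) ≠ 0 ∨ (fun i => (v i).im) ≠ 0 := by
      by_contra h
      push_neg at h
      apply hv0
      ext i
      have h1 := congrFun h.1 i
      have h2 := congrFun h.2 i
      simp only [Pi.zero_apply] at h1 h2 ⊢
      exact Complex.ext h1 h2
    rcases hne with h | h
    · have := hB.dotProduct_mulVec_pos h
      have h2 := hqpos (fun i => (v i).im)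
      simp only [star_trivial] at this
      rw [hr]; linarith
    · have := hB.dotProduct_mulVec_pos h
      have h2 := hqpos (fun i => (v i).re)
      simp only [star_trivial] at this
      rw [hr]; linarith
  -- conclude
  rw [hc, he] at key
  refine ⟨s / r, div_nonneg hs0 hr0.le, ?_⟩
  have hrne : (r : ℂ) ≠ 0 := by
    exact_mod_cast ne_of_gt hr0
  field_simp
  rw [Complex.ofReal_div, eq_div_iff hrne, key]
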